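/- arXiv:1406.6584 — 5 statements merged into one kernel-verified Lean document; each statement's English description precedes it below -/
import Mathlib

section
/- Let f : [0,∞) → [0,∞) be nondecreasing and satisfy f(cλt) ≥ λ f(t) for all λ ≥ 1 and t ≥ t₀, where t₀ ≥ 0 and c ≥ 2. Then there exists a function g : [0,∞) → [0,∞) which is convex on [c·t₀, ∞), satisfies g(c·t₀) = 0, and satisfies g(t) ≤ f(t) ≤ g(c²t) for all t ≥ c·t₀. -/
open Set

/-- If a nondecreasing `f : [0,∞) → [0,∞)` satisfies `f (c * l * t) ≥ l * f t` for all
`l ≥ 1`, `t ≥ t₀`, with `t₀ ≥ 0`, `c ≥ 2`, then there is `g` convex on `[c*t₀, ∞)` with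
`g (c*t₀) = 0` and `g t ≤ f t ≤ g (c^2 * t)` for `t ≥ c*t₀`. -/
theorem stmt0 (f : ℝ → ℝ) (t₀ c : ℝ)
    (hf_nonneg : ∀ t, 0 ≤ t → 0 ≤ f t)
    (hf_mono : MonotoneOn f (Set.Ici (0 : ℝ)))
    (ht₀ : 0 ≤ t₀) (hc : 2 ≤ c)
    (hsub : ∀ l : ℝ, 1 ≤ l → ∀ t : ℝ, t₀ ≤ t → l * f t ≤ f (c * l * t)) :
    ∃ g : ℝ → ℝ, (∀ t, 0 ≤ t → 0 ≤ g t) ∧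
      ConvexOn ℝ (Set.Ici (c * t₀)) g ∧
      g (c * t₀) = 0 ∧
      ∀ t, c * t₀ ≤ t → g t ≤ f t ∧ f t ≤ g (c ^ 2 * t) := by
  have hc0 : (0:ℝ) < c := by linarith
  set S : Set ℝ := {s | t₀ ≤ s ∧ 0 < s} with hSdef
  set L : ℝ → ℝ → ℝ := fun s t => f s / (c * s) * (t - c * s) with hLdef
  set g : ℝ → ℝ := fun t => sSup ((fun s => max (L s t) 0) '' S) with hgdef
  have hs₀ : (t₀ + 1) ∈ S := ⟨by linarith, by linarith⟩
  have hSne : S.Nonempty := ⟨t₀ + 1, hs₀⟩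
  have hne : ∀ t, ((fun s => max (L s t) 0) '' S).Nonempty := fun t => hSne.image _
  -- L s t ≤ f t when c*s ≤ t
  have hLle : ∀ s ∈ S, ∀ t : ℝ, c * s ≤ t → L s t ≤ f t := by
    intro s hs t ht
    have hcs : 0 < c * s := mul_pos hc0 hs.2
    have hfs : 0 ≤ f s := hf_nonneg s hs.2.le
    have h1 : (1:ℝ) ≤ t / (c * s) := (one_le_div hcs).2 ht
    have h2 := hsub (t / (c * s)) h1 s hs.1
    have heq : c * (t / (c * s)) * s = t := by field_simp; rw [mul_div_cancel_right₀ t hs.2.ne']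
    rw [heq] at h2
    have h3 : L s t ≤ t / (c * s) * f s := by
      have h4 : f s / (c * s) * (t - c * s) ≤ f s / (c * s) * t :=
        mul_le_mul_of_nonneg_left (by linarith) (div_nonneg hfs hcs.le)
      calc L s t = f s / (c * s) * (t - c * s) := rfl
        _ ≤ f s / (c * s) * t := h4
        _ = t / (c * s) * f s := by ring
    linarith
  -- L s t ≤ 0 when t ≤ c*s
  have hLnp : ∀ s ∈ S, ∀ t : ℝ, t ≤ c * s → L s t ≤ 0 := by
    intro s hs t ht
    have hcs : 0 < c * s := mul_pos hc0 hs.2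
    have hfs : 0 ≤ f s := hf_nonneg s hs.2.le
    exact mul_nonpos_of_nonneg_of_nonpos (div_nonneg hfs hcs.le) (by linarith)
  have hmax : ∀ s ∈ S, ∀ t : ℝ, max (L s t) 0 ≤ max (f t) 0 := by
    intro s hs t
    rcases le_or_gt (c * s) t with h | h
    · exact max_le ((hLle s hs t h).trans (le_max_left _ _)) (le_max_right _ _)
    · exact max_le ((hLnp s hs t h.le).trans (le_max_right _ _)) (le_max_right _ _)
  have hbdd : ∀ t : ℝ, BddAbove ((fun s => max (L s t) 0) '' S) := by
    intro t
    refine ⟨max (f t) 0, ?_⟩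
    rintro x ⟨s, hs, rfl⟩
    exact hmax s hs t
  have hmem : ∀ s ∈ S, ∀ t : ℝ, max (L s t) 0 ≤ g t := by
    intro s hs t
    exact le_csSup (hbdd t) (mem_image_of_mem _ hs)
  have hgnn : ∀ t : ℝ, 0 ≤ g t :=
    fun t => le_trans (le_max_right (L (t₀ + 1) t) 0) (hmem _ hs₀ t)
  have hct₀ : 0 ≤ c * t₀ := mul_nonneg hc0.le ht₀
  refine ⟨g, fun t _ => hgnn t, ?_, ?_, ?_⟩
  · -- convexity
    refine ⟨convex_Ici _, ?_⟩
    intro x hx y hy a b ha hb hab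
    simp only [smul_eq_mul]
    rw [hgdef]
    apply csSup_le (hne _)
    rintro z ⟨s, hs, rfl⟩
    have hLaff : L s (a * x + b * y) = a * L s x + b * L s y := by
      have hb' : b = 1 - a := by linarith
      subst hb'
      simp only [hLdef]
      ring
    have hx' := hmem s hs x
    have hy' := hmem s hs y
    have h1 : max (L s (a * x + b * y)) 0 ≤ a * max (L s x) 0 + b * max (L s y) 0 := by
      apply max_le
      · rw [hLaff]
        have e1 := mul_le_mul_of_nonneg_left (le_max_left (L s x) 0) ha
        have e2 := mul_le_mul_of_nonneg_left (le_max_left (L s y) 0) hb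
        linarith
      · have e1 : 0 ≤ a * max (L s x) 0 := mul_nonneg ha (le_max_right _ _)
        have e2 : 0 ≤ b * max (L s y) 0 := mul_nonneg hb (le_max_right _ _)
        linarith
    have e3 := mul_le_mul_of_nonneg_left hx' ha
    have e4 := mul_le_mul_of_nonneg_left hy' hb
    dsimp only
    linarith
  · -- g (c * t₀) = 0
    refine le_antisymm ?_ (hgnn _)
    rw [hgdef]
    apply csSup_le (hne _)
    rintro z ⟨s, hs, rfl⟩
    have : L s (c * t₀) ≤ 0 := hLnp s hs _ (by nlinarith [hs.1])
    simp [this]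
  · intro t ht
    have ht0 : 0 ≤ t := hct₀.trans ht
    have hft : 0 ≤ f t := hf_nonneg t ht0
    constructor
    · -- g t ≤ f t
      rw [hgdef]
      apply csSup_le (hne _)
      rintro z ⟨s, hs, rfl⟩
      apply max_le _ hft
      rcases le_or_gt (c * s) t with h | h
      · exact hLle s hs t h
      · exact (hLnp s hs t h.le).trans hft
    · -- f t ≤ g (c^2 * t)
      rcases eq_or_lt_of_le ht0 with h0 | h0
      · -- t = 0, so f 0 = 0
        have ht₀0 : t₀ = 0 := by nlinarith
        have h2 := hsub 2 (by norm_num) 0 (by rw [ht₀0])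
        simp only [mul_zero] at h2
        have hf0 : f 0 = 0 := le_antisymm (by linarith) (hf_nonneg 0 le_rfl)
        rw [← h0, mul_zero, ← h0] at *
        rw [hf0]
        exact hgnn 0
      · have hts : t ∈ S := ⟨by nlinarith, h0⟩
        have key : f t ≤ max (L t (c ^ 2 * t)) 0 := by
          have : L t (c ^ 2 * t) = f t * (c - 1) := by
            simp only [hLdef]
            field_simp
        
          rw [this] at *
          have : f t ≤ f t * (c - 1) := by nlinarith
          exact this.trans (le_max_left _ _)
        exact key.trans (hmem t hts _)
end

section
/- Let X be a random variable whose moments grow α-regularly, i.e. ‖X‖_p ≤ α(p/q)‖X‖_q for all p ≥ q ≥ 2, with α ≥ 1. Let q ≥ 2 and set t = (1−1/e)‖X‖_q, assuming ‖X‖_q < ∞ and ‖X‖_q > 0. Then N(t) := −ln P(|X| > t) satisfies N(t) ≤ q·ln(e(2α)²). -/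
set_option maxHeartbeats 1000000

open MeasureTheory

/-- `‖X‖_p = (E|X|^p)^{1/p}`. -/
noncomputable def mnorm {Ω : Type*} [MeasurableSpace Ω] (μ : Measure Ω) (X : Ω → ℝ)
    (p : ℝ) : ℝ :=
  (∫ ω, |X ω| ^ p ∂μ) ^ (1 / p)

/-- If the moments of `X` grow α-regularly, `q ≥ 2` and `t = (1 - 1/e)‖X‖_q` with
`0 < ‖X‖_q < ∞`, then `N(t) = -ln P(|X| > t) ≤ q ln(e (2α)²)`, i.e.
`P(|X| > t) ≥ exp(-q ln(e (2α)²))`. -/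
theorem stmt3 {Ω : Type*} [MeasurableSpace Ω] (μ : Measure Ω) [IsProbabilityMeasure μ]
    (X : Ω → ℝ) (α : ℝ) (hα : 1 ≤ α)
    (hmem : ∀ p : ℝ, 2 ≤ p → MemLp X (ENNReal.ofReal p) μ)
    (hreg : ∀ p q : ℝ, 2 ≤ q → q ≤ p → mnorm μ X p ≤ α * (p / q) * mnorm μ X q)
    (q : ℝ) (hq : 2 ≤ q) (hpos : 0 < mnorm μ X q) :
    Real.exp (-(q * Real.log (Real.exp 1 * (2 * α) ^ 2)))
      ≤ (μ {ω | (1 - 1 / Real.exp 1) * mnorm μ X q < |X ω|}).toReal := by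
  have hq0 : (0:ℝ) < q := by linarith
  obtain ⟨Y, hYm, hXY⟩ : ∃ Y, StronglyMeasurable Y ∧ X =ᵐ[μ] Y :=
    ⟨(hmem 2 le_rfl).1.mk X, (hmem 2 le_rfl).1.stronglyMeasurable_mk,
      (hmem 2 le_rfl).1.ae_eq_mk⟩
  have he1 : (1:ℝ) < Real.exp 1 := by
    have := Real.exp_one_gt_d9; linarith
  set e := Real.exp 1 with he
  set m := mnorm μ X q with hm
  set t := (1 - 1/e) * m with htdef
  have hu0 : (0:ℝ) < 1/e := by positivity
  have hu1 : 1/e < 1 := by rw [div_lt_one (by positivity)]; exact he1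
  have ht0 : 0 < t := mul_pos (by linarith) hpos
  have hα0 : (0:ℝ) < α := by linarith
  -- transfer to measurable representative Y
  have hint_eq : ∀ p : ℝ, (∫ ω, |X ω| ^ p ∂μ) = ∫ ω, |Y ω| ^ p ∂μ := fun p =>
    integral_congr_ae (hXY.mono fun ω h => by dsimp only; rw [h])
  have hmn : ∀ p : ℝ, mnorm μ X p = (∫ ω, |Y ω| ^ p ∂μ) ^ (1/p) := fun p => by
    rw [mnorm, hint_eq]
  have hmemY : ∀ p : ℝ, 2 ≤ p → MemLp Y (ENNReal.ofReal p) μ := fun p hp =>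
    (hmem p hp).ae_eq hXY
  have hintY : ∀ p : ℝ, 2 ≤ p → Integrable (fun ω => |Y ω| ^ p) μ := fun p hp => by
    have hp0 : (0:ℝ) < p := by linarith
    have h := (hmemY p hp).integrable_norm_rpow
      (by simp [ENNReal.ofReal_eq_zero, not_le, hp0]) ENNReal.ofReal_ne_top
    simpa [ENNReal.toReal_ofReal hp0.le, Real.norm_eq_abs] using h
  set I := ∫ ω, |Y ω| ^ q ∂μ with hIdef
  have hI0 : 0 ≤ I := integral_nonneg fun ω => Real.rpow_nonneg (abs_nonneg _) _
  have hIm : m ^ q = I := by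
    rw [hm, hmn q, ← Real.rpow_mul hI0, one_div, inv_mul_cancel₀ hq0.ne', Real.rpow_one]
  set J := ∫ ω, |Y ω| ^ (q * 2) ∂μ with hJdef
  have hJ0 : 0 ≤ J := integral_nonneg fun ω => Real.rpow_nonneg (abs_nonneg _) _
  -- moment growth: J ≤ ((2α) m)^(q*2)
  have hJle : J ≤ (2 * α * m) ^ (q * 2) := by
    have hreg' : J ^ (1/(q * 2)) ≤ 2 * α * m := by
      have h := hreg (q * 2) q hq (by linarith)
      rw [hmn (q * 2)] at h
      refine h.trans_eq ?_
      rw [← hm, show q * 2 / q = 2 by field_simp]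
      ring
    have := Real.rpow_le_rpow (Real.rpow_nonneg hJ0 _) hreg' (by linarith : (0:ℝ) ≤ q * 2)
    rwa [← Real.rpow_mul hJ0, one_div, inv_mul_cancel₀ (by linarith : q * 2 ≠ 0),
      Real.rpow_one] at this
  -- the event, with measurable Y
  set A := {ω | t < |Y ω|} with hAdef
  have hA : MeasurableSet A := measurableSet_lt measurable_const hYm.measurable.abs
  have hμA : μ {ω | t < |X ω|} = μ A := by
    refine measure_congr (hXY.mono fun ω h => ?_)
    change (t < |X ω|) = (t < |Y ω|)
    rw [h]
  set P := (μ A).toReal with hPdef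
  have hP0 : 0 ≤ P := ENNReal.toReal_nonneg
  -- Cauchy-Schwarz
  have hconj : Real.HolderConjugate 2 2 := Real.HolderConjugate.two_two
  have hf2 : MemLp (fun ω => |Y ω| ^ q) (ENNReal.ofReal 2) μ := by
    have h := (hmemY (2 * q) (by linarith)).norm_rpow_div (ENNReal.ofReal q)
    have hdiv : ENNReal.ofReal (2 * q) / ENNReal.ofReal q = ENNReal.ofReal 2 := by
      rw [← ENNReal.ofReal_div_of_pos hq0]
      congr 1
      field_simp
    rw [hdiv, ENNReal.toReal_ofReal hq0.le] at h
    simpa [Real.norm_eq_abs] using h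
  have hg2 : MemLp (A.indicator fun _ => (1:ℝ)) (ENNReal.ofReal 2) μ :=
    memLp_indicator_const _ hA 1 (Or.inr (measure_ne_top μ A))
  have hCS := integral_mul_le_Lp_mul_Lq_of_nonneg hconj
    (f := fun ω => |Y ω| ^ q) (g := A.indicator fun _ => 1)
    (Filter.Eventually.of_forall fun ω => Real.rpow_nonneg (abs_nonneg _) _)
    (Filter.Eventually.of_forall fun ω => Set.indicator_nonneg (fun _ _ => zero_le_one) ω)
    hf2 hg2
  have hCS' : ∫ ω in A, |Y ω| ^ q ∂μ ≤ J ^ (1/(2:ℝ)) * P ^ (1/(2:ℝ)) := by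
    have hL : (∫ ω, |Y ω| ^ q * A.indicator (fun _ => (1:ℝ)) ω ∂μ)
        = ∫ ω in A, |Y ω| ^ q ∂μ := by
      rw [← integral_indicator hA]
      refine integral_congr_ae (Filter.Eventually.of_forall fun ω => ?_)
      by_cases hω : ω ∈ A <;> simp [Set.indicator_apply, hω]
    have hR1 : (∫ ω, (|Y ω| ^ q) ^ (2:ℝ) ∂μ) = J := by
      refine integral_congr_ae (Filter.Eventually.of_forall fun ω => ?_)
      show (|Y ω| ^ q) ^ (2:ℝ) = |Y ω| ^ (q * 2)
      rw [← Real.rpow_mul (abs_nonneg _)]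
    have hR2 : (∫ ω, A.indicator (fun _ => (1:ℝ)) ω ^ (2:ℝ) ∂μ) = P := by
      rw [hPdef, ← Measure.real_def, ← integral_indicator_one hA]
      refine integral_congr_ae (Filter.Eventually.of_forall fun ω => ?_)
      by_cases hω : ω ∈ A <;> simp [Set.indicator_apply, hω]
    rw [hL, hR1, hR2] at hCS
    exact hCS
  -- lower bound for the set integral
  have htq : t ^ q = (1 - 1/e) ^ q * m ^ q := Real.mul_rpow (by linarith) hpos.le
  have hcompl : ∫ ω in Aᶜ, |Y ω| ^ q ∂μ ≤ t ^ q := by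
    have hmono : ∫ ω in Aᶜ, |Y ω| ^ q ∂μ ≤ ∫ _ in Aᶜ, t ^ q ∂μ := by
      refine setIntegral_mono_on ((hintY q hq).integrableOn)
        (integrableOn_const (measure_ne_top μ _)) hA.compl fun ω hω => ?_
      have : |Y ω| ≤ t := not_lt.1 hω
      exact Real.rpow_le_rpow (abs_nonneg _) this hq0.le
    have hconst : ∫ _ in Aᶜ, t ^ q ∂μ = (μ Aᶜ).toReal * t ^ q := by
      rw [setIntegral_const, smul_eq_mul, Measure.real_def]
    have hle1 : (μ Aᶜ).toReal ≤ 1 := by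
      have := prob_le_one (μ := μ) (s := Aᶜ)
      simpa using ENNReal.toReal_mono (by simp) this
    calc ∫ ω in Aᶜ, |Y ω| ^ q ∂μ ≤ (μ Aᶜ).toReal * t ^ q := by rw [← hconst]; exact hmono
      _ ≤ 1 * t ^ q := by
          exact mul_le_mul_of_nonneg_right hle1 (Real.rpow_nonneg ht0.le _)
      _ = t ^ q := one_mul _
  have hsetlow : (1 - (1 - 1/e) ^ q) * m ^ q ≤ ∫ ω in A, |Y ω| ^ q ∂μ := by
    have hsplit : (∫ ω in A, |Y ω| ^ q ∂μ) + ∫ ω in Aᶜ, |Y ω| ^ q ∂μ = I :=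
      integral_add_compl hA (hintY q hq)
    have : I - t ^ q ≤ ∫ ω in A, |Y ω| ^ q ∂μ := by linarith
    calc (1 - (1 - 1/e) ^ q) * m ^ q = m ^ q - (1 - 1/e) ^ q * m ^ q := by ring
      _ = I - t ^ q := by rw [← hIm, htq]
      _ ≤ _ := this
  -- combine
  have hJhalf : J ^ (1/(2:ℝ)) ≤ (2 * α * m) ^ q := by
    have h := Real.rpow_le_rpow hJ0 hJle (by norm_num : (0:ℝ) ≤ 1/2)
    rwa [← Real.rpow_mul (by positivity : (0:ℝ) ≤ 2 * α * m),
      show q * 2 * (1/2) = q by ring] at h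
  set θ := (1 - 1/e) ^ q with hθdef
  have hθ1 : θ ≤ 1 := Real.rpow_le_one (by linarith) (by linarith) hq0.le
  have hkey : (1 - θ) * m ^ q ≤ (2 * α * m) ^ q * P ^ (1/(2:ℝ)) := by
    calc (1 - θ) * m ^ q ≤ ∫ ω in A, |Y ω| ^ q ∂μ := hsetlow
      _ ≤ J ^ (1/(2:ℝ)) * P ^ (1/(2:ℝ)) := hCS'
      _ ≤ (2 * α * m) ^ q * P ^ (1/(2:ℝ)) :=
          mul_le_mul_of_nonneg_right hJhalf (Real.rpow_nonneg hP0 _)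
  have hmul : (2 * α * m) ^ q = (2 * α) ^ q * m ^ q :=
    Real.mul_rpow (by linarith) hpos.le
  have hc0 : (0:ℝ) < (2 * α) ^ q := Real.rpow_pos_of_pos (by linarith) _
  have hmq : (0:ℝ) < m ^ q := Real.rpow_pos_of_pos hpos _
  have hPhalf : (1 - θ) / (2 * α) ^ q ≤ P ^ (1/(2:ℝ)) := by
    rw [div_le_iff₀ hc0]
    have := hkey
    rw [hmul] at this
    nlinarith [Real.rpow_nonneg hP0 (1/(2:ℝ))]
  have hPP : ((1 - θ) / (2 * α) ^ q) ^ (2:ℝ) ≤ P := by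
    have h1θ : 0 ≤ (1 - θ) / (2 * α) ^ q := div_nonneg (by linarith) hc0.le
    have := Real.rpow_le_rpow h1θ hPhalf (by norm_num : (0:ℝ) ≤ 2)
    rwa [← Real.rpow_mul hP0, show (1/(2:ℝ)) * 2 = 1 by norm_num, Real.rpow_one] at this
  -- final numeric comparison
  rw [hμA, ← hPdef]
  refine le_trans ?_ hPP
  have hcpos : (0:ℝ) < e * (2 * α) ^ (2:ℕ) := by positivity
  have hexp : Real.exp (-(q * Real.log (e * (2 * α) ^ (2:ℕ))))
      = (e * (2 * α) ^ (2:ℕ)) ^ (-q : ℝ) := by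
    rw [Real.rpow_def_of_pos hcpos]; ring_nf
  rw [hexp]
  have hrw : ((e * (2 * α) ^ (2:ℕ)) : ℝ) ^ (-q : ℝ)
      = e ^ (-q : ℝ) * ((2 * α) ^ ((2:ℝ) * q))⁻¹ := by
    rw [Real.mul_rpow (by positivity) (by positivity), ← Real.rpow_natCast (2 * α) 2,
      ← Real.rpow_mul (by linarith : (0:ℝ) ≤ 2 * α)]
    push_cast
    rw [show (2:ℝ) * (-q) = -((2:ℝ) * q) by ring,
      Real.rpow_neg (by linarith : (0:ℝ) ≤ 2 * α) (2 * q)]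
  have hrhs : ((1 - θ) / (2 * α) ^ q) ^ (2:ℝ)
      = (1 - θ) ^ (2:ℝ) * ((2 * α) ^ ((2:ℝ) * q))⁻¹ := by
    rw [Real.div_rpow (by linarith) hc0.le, ← Real.rpow_mul (by linarith : (0:ℝ) ≤ 2 * α),
      show q * 2 = (2:ℝ) * q by ring, div_eq_mul_inv]
  rw [hrw, hrhs]
  refine mul_le_mul_of_nonneg_right ?_ (by positivity)
  -- e^(-q) ≤ (1-θ)^2
  have hθ2 : θ ≤ (1 - 1/e) ^ (2:ℝ) :=
    Real.rpow_le_rpow_of_exponent_ge (by linarith) (by linarith) hq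
  have hlow : e ^ (-(q/2) : ℝ) ≤ 1 - θ := by
    have h1 : e ^ (-(q/2) : ℝ) ≤ e ^ (-1 : ℝ) :=
      Real.rpow_le_rpow_of_exponent_le he1.le (by linarith)
    have h2 : e ^ (-1 : ℝ) = 1/e := by rw [Real.rpow_neg_one, one_div]
    have h3 : (1 - 1/e) ^ (2:ℝ) = (1 - 1/e) ^ (2:ℕ) := by
      rw [← Real.rpow_natCast (1 - 1/e) 2]; norm_num
    have h4 : (1:ℝ)/e ≤ 1 - (1 - 1/e) ^ (2:ℕ) := by nlinarith
    calc e ^ (-(q/2) : ℝ) ≤ 1/e := by rw [← h2]; exact h1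
      _ ≤ 1 - (1 - 1/e) ^ (2:ℝ) := by rw [h3]; exact h4
      _ ≤ 1 - θ := by linarith
  have := Real.rpow_le_rpow (Real.rpow_nonneg (by linarith : (0:ℝ) ≤ e) _) hlow
    (by norm_num : (0:ℝ) ≤ 2)
  rwa [← Real.rpow_mul (by linarith : (0:ℝ) ≤ e), show (-(q/2)) * 2 = -q by ring] at this
end

section
/- Let X be a random variable with E X² = 1 whose moments grow α-regularly (α ≥ 1) and with speed β > 1 (‖X‖_{βp} ≥ 2‖X‖_p for p ≥ 2). For t ≥ 2 define q = inf{p ≥ 2 : ‖X‖_{βp} ≥ t}. Then N(t) := −ln P(|X| > t) ≥ q·ln 2. -/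
open MeasureTheory

lemma mnorm_nonneg {Ω : Type*} [MeasurableSpace Ω] (μ : Measure Ω) (X : Ω → ℝ) (p : ℝ) :
    0 ≤ mnorm μ X p :=
  Real.rpow_nonneg (integral_nonneg fun ω => Real.rpow_nonneg (abs_nonneg _) _) _

lemma markov_aux {Ω : Type*} [MeasurableSpace Ω] (μ : Measure Ω) [IsProbabilityMeasure μ]
    (X : Ω → ℝ) (p t : ℝ) (hp : 0 < p) (ht : 0 < t)
    (hint : Integrable (fun ω => |X ω| ^ p) μ) :
    (μ {ω | t < |X ω|}).toReal * t ^ p ≤ ∫ ω, |X ω| ^ p ∂μ := by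
  have h1 : t ^ p * (μ {ω | t ^ p ≤ |X ω| ^ p}).toReal ≤ ∫ ω, |X ω| ^ p ∂μ :=
    mul_meas_ge_le_integral_of_nonneg
      (Filter.Eventually.of_forall fun ω => Real.rpow_nonneg (abs_nonneg _) _) hint _
  have hsub : {ω | t < |X ω|} ⊆ {ω | t ^ p ≤ |X ω| ^ p} := fun ω hω =>
    Real.rpow_le_rpow ht.le (le_of_lt hω) hp.le
  have hmono : (μ {ω | t < |X ω|}).toReal ≤ (μ {ω | t ^ p ≤ |X ω| ^ p}).toReal :=
    ENNReal.toReal_mono (measure_ne_top _ _) (measure_mono hsub)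
  calc (μ {ω | t < |X ω|}).toReal * t ^ p
      ≤ (μ {ω | t ^ p ≤ |X ω| ^ p}).toReal * t ^ p :=
        mul_le_mul_of_nonneg_right hmono (Real.rpow_nonneg ht.le _)
    _ = t ^ p * (μ {ω | t ^ p ≤ |X ω| ^ p}).toReal := mul_comm _ _
    _ ≤ _ := h1

/-- If `E X² = 1`, the moments of `X` grow α-regularly and with speed `β > 1`, then for
`t ≥ 2` and `q = inf {p ≥ 2 : ‖X‖_{βp} ≥ t}` one has `N(t) = -ln P(|X| > t) ≥ q ln 2`,
i.e. `P(|X| > t) ≤ 2^{-q}`. -/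
theorem stmt9 {Ω : Type*} [MeasurableSpace Ω] (μ : Measure Ω) [IsProbabilityMeasure μ]
    (X : Ω → ℝ) (α β : ℝ) (hα : 1 ≤ α) (hβ : 1 < β)
    (hvar : ∫ ω, (X ω) ^ 2 ∂μ = 1)
    (hmem : ∀ p : ℝ, 2 ≤ p → MemLp X (ENNReal.ofReal p) μ)
    (hreg : ∀ p q : ℝ, 2 ≤ q → q ≤ p → mnorm μ X p ≤ α * (p / q) * mnorm μ X q)
    (hspeed : ∀ p : ℝ, 2 ≤ p → 2 * mnorm μ X p ≤ mnorm μ X (β * p))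
    (t : ℝ) (ht : 2 ≤ t) :
    (μ {ω | t < |X ω|}).toReal
      ≤ 2 ^ (-(sInf {p : ℝ | 2 ≤ p ∧ t ≤ mnorm μ X (β * p)})) := by
  set S : Set ℝ := {p : ℝ | 2 ≤ p ∧ t ≤ mnorm μ X (β * p)} with hSdef
  set q : ℝ := sInf S with hqdef
  set P : ℝ := (μ {ω | t < |X ω|}).toReal with hPdef
  have ht0 : (0:ℝ) < t := lt_of_lt_of_le two_pos ht
  have hint : ∀ p : ℝ, 2 ≤ p → Integrable (fun ω => |X ω| ^ p) μ := by
    intro p hp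
    have hp0 : (0:ℝ) < p := lt_of_lt_of_le two_pos hp
    have h := (hmem p hp).integrable_norm_rpow (by simp [hp0]) (by simp)
    rw [ENNReal.toReal_ofReal hp0.le] at h
    simpa [Real.norm_eq_abs] using h
  have habs2 : ∀ ω : Ω, |X ω| ^ (2:ℝ) = X ω ^ 2 := fun ω => by
    rw [show (2:ℝ) = ((2:ℕ):ℝ) by norm_num, Real.rpow_natCast, sq_abs]
  have hvar' : ∫ ω, |X ω| ^ (2:ℝ) ∂μ = 1 := by simp only [habs2]; exact hvar
  have hm2 : mnorm μ X 2 = 1 := by unfold mnorm; rw [hvar', Real.one_rpow]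
  -- key Chebyshev bound
  have hkey : ∀ p : ℝ, 2 ≤ p → mnorm μ X (β * p) < t → P ≤ 2 ^ (-p) := by
    intro p hp hlt
    have hp0 : (0:ℝ) < p := lt_of_lt_of_le two_pos hp
    have hnorm : mnorm μ X p ≤ t / 2 := by
      have := hspeed p hp; linarith
    have hInt0 : 0 ≤ ∫ ω, |X ω| ^ p ∂μ :=
      integral_nonneg fun ω => Real.rpow_nonneg (abs_nonneg _) _
    have hI : (mnorm μ X p) ^ p = ∫ ω, |X ω| ^ p ∂μ := by
      unfold mnorm
      rw [← Real.rpow_mul hInt0, one_div_mul_cancel hp0.ne', Real.rpow_one]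
    have h1 := markov_aux μ X p t hp0 ht0 (hint p hp)
    have h2 : ∫ ω, |X ω| ^ p ∂μ ≤ (t/2) ^ p := by
      rw [← hI]; exact Real.rpow_le_rpow (mnorm_nonneg μ X p) hnorm hp0.le
    have h3 : (t/2:ℝ) ^ p = 2 ^ (-p) * t ^ p := by
      rw [Real.div_rpow ht0.le (by norm_num : (0:ℝ) ≤ 2),
        Real.rpow_neg (by norm_num : (0:ℝ) ≤ 2)]
      field_simp
    have htp : (0:ℝ) < t ^ p := Real.rpow_pos_of_pos ht0 p
    have h4 : P * t ^ p ≤ 2 ^ (-p) * t ^ p := by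
      rw [h3] at h2; linarith
    exact le_of_mul_le_mul_right h4 htp
  -- nonemptiness and bounds on S
  have hpow : ∀ n : ℕ, (2:ℝ) ^ n ≤ mnorm μ X (β ^ n * 2) := by
    intro n; induction n with
    | zero => simp [hm2]
    | succ n ih =>
      have hb : (1:ℝ) ≤ β ^ n := one_le_pow₀ hβ.le
      have hp2 : (2:ℝ) ≤ β ^ n * 2 := by nlinarith
      have h1 := hspeed (β ^ n * 2) hp2
      have heq : β * (β ^ n * 2) = β ^ (n+1) * 2 := by ring
      rw [heq] at h1
      have h2 : (2:ℝ) ^ (n+1) = 2 * 2 ^ n := by ring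
      rw [h2]; linarith
  have hbdd : BddBelow S := ⟨2, fun p hp => hp.1⟩
  have hne : S.Nonempty := by
    obtain ⟨n, hn⟩ := pow_unbounded_of_one_lt t (one_lt_two : (1:ℝ) < 2)
    refine ⟨β ^ n * 2, ⟨by nlinarith [one_le_pow₀ (n := n) hβ.le], ?_⟩⟩
    have h1 := hpow (n + 1)
    have heq : β ^ (n+1) * 2 = β * (β ^ n * 2) := by ring
    rw [heq] at h1
    have h2 : (2:ℝ) ^ n ≤ 2 ^ (n+1) := by
      have : (0:ℝ) < 2 ^ n := by positivity
      calc (2:ℝ) ^ n = 1 * 2 ^ n := (one_mul _).symm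
        _ ≤ 2 * 2 ^ n := by nlinarith
        _ = 2 ^ (n+1) := by ring
    linarith
  have hq2 : 2 ≤ q := le_csInf hne fun p hp => hp.1
  by_cases h2S : t ≤ mnorm μ X (β * 2)
  · have hqe : q = 2 := le_antisymm (csInf_le hbdd ⟨le_refl 2, h2S⟩) hq2
    rw [hqe]
    have h1 := markov_aux μ X 2 t two_pos ht0 (hint 2 le_rfl)
    rw [hvar'] at h1
    have h22 : (2:ℝ) ^ (2:ℝ) = 4 := by
      rw [show (2:ℝ) = ((2:ℕ):ℝ) by norm_num, Real.rpow_natCast]; norm_num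
    have ht2 : (4:ℝ) ≤ t ^ (2:ℝ) := by
      have h := Real.rpow_le_rpow (by norm_num : (0:ℝ) ≤ 2) ht (by norm_num : (0:ℝ) ≤ 2)
      rw [h22] at h; exact h
    have hPn : 0 ≤ P := ENNReal.toReal_nonneg
    have hval : (2:ℝ) ^ (-(2:ℝ)) = 1/4 := by
      rw [Real.rpow_neg (by norm_num : (0:ℝ) ≤ 2), h22]; norm_num
    rw [hval]; nlinarith
  · push_neg at h2S
    rcases eq_or_lt_of_le hq2 with hqe | hqlt
    · rw [← hqe]; exact hkey 2 le_rfl h2S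
    · have hev : ∀ᶠ p in nhdsWithin q (Set.Iio q), P ≤ 2 ^ (-p) := by
        have hIoo : Set.Ioo 2 q ∈ nhdsWithin q (Set.Iio q) :=
          Ioo_mem_nhdsLT_of_mem ⟨hqlt, le_refl q⟩
        filter_upwards [hIoo] with p hp
        have hpS : p ∉ S := notMem_of_lt_csInf hp.2 hbdd
        have hlt : mnorm μ X (β * p) < t := by
          by_contra hc; push_neg at hc; exact hpS ⟨hp.1.le, hc⟩
        exact hkey p hp.1.le hlt
      have htend : Filter.Tendsto (fun p : ℝ => (2:ℝ) ^ (-p))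
          (nhdsWithin q (Set.Iio q)) (nhds ((2:ℝ) ^ (-q))) := by
        apply Filter.Tendsto.mono_left _ nhdsWithin_le_nhds
        exact (Continuous.rpow continuous_const continuous_neg
          fun x => Or.inl two_ne_zero).tendsto q
      exact ge_of_tendsto htend hev
end

section
/- Let (X_t)_{t∈ℓ²} be a canonical process X_t = ∑_i t_i X_i with independent standardized X_i, and suppose: (i) for every finite T ⊂ ℓ², E sup_{s,t∈T}(X_s − X_t) ≥ κ·γ_X(T), and (ii) ‖X_t‖_{2p} ≤ γ‖X_t‖_p for all p ≥ 1, t ∈ ℓ². Then X satisfies the Sudakov minoration principle with constant κ/γ: for every p ≥ 1 and finite T ⊂ ℓ² with |T| ≥ e^p and ‖X_s − X_t‖_p ≥ u for all distinct s,t ∈ T, one has E sup_{s,t∈T}(X_s − X_t) ≥ (κ/γ)u. -/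
open MeasureTheory ProbabilityTheory ENNReal
open Filter

lemma auxSummableMeasurable {Ω : Type*} [m : MeasurableSpace Ω] (g : ℕ → Ω → ℝ)
    (hg : ∀ i, Measurable (g i)) :
    MeasurableSet {ω | Summable fun i => g i ω} := by
  have hset : {ω | Summable fun i => g i ω}
      = {ω | ∃ l, Tendsto (fun n => ∑ i ∈ Finset.range n, |g i ω|) atTop (nhds l)} := by
    ext ω
    simp only [Set.mem_setOf_eq]
    constructor
    · intro h
      exact ⟨_, (summable_abs_iff.mpr h).hasSum.tendsto_sum_nat⟩
    · rintro ⟨l, hl⟩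
      refine summable_abs_iff.mp (summable_of_sum_range_le (c := l) (fun i => abs_nonneg _) fun n => ?_)
      refine Monotone.ge_of_tendsto (monotone_nat_of_le_succ fun n => ?_) hl n
      rw [Finset.sum_range_succ]
      exact le_add_of_nonneg_right (abs_nonneg _)
  rw [hset]
  exact measurableSet_exists_tendsto fun n => Finset.measurable_sum _ fun i _ => (hg i).abs

lemma auxZeroOne {Ω : Type*} [m0 : MeasurableSpace Ω] (μ : Measure Ω) [IsProbabilityMeasure μ]
    (Y : ℕ → Ω → ℝ) (hmeas : ∀ i, Measurable (Y i))
    (hindep : iIndepFun Y μ)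
    (c : ℕ → ℝ) :
    μ {ω | Summable fun i => c i * Y i ω} = 0 ∨ μ {ω | Summable fun i => c i * Y i ω} = 1 := by
  set s : ℕ → MeasurableSpace Ω := fun i => MeasurableSpace.comap (Y i) inferInstance with hs
  have h_le : ∀ n, s n ≤ m0 := fun n => (hmeas n).comap_le
  have hYs : ∀ i, Measurable[s i] (Y i) := fun i t ht => ⟨t, ht, rfl⟩
  refine measure_zero_or_one_of_measurableSet_limsup_atTop h_le hindep.iIndep ?_
  rw [limsup_eq_iInf_iSup_of_nat, MeasurableSpace.measurableSet_iInf]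
  intro N
  have hle2 : ∀ i, s (i + N) ≤ ⨆ j ≥ N, s j := fun i =>
    le_iSup₂ (f := fun j (_ : j ≥ N) => s j) (i + N) (Nat.le_add_left N i)
  have hmeas' : ∀ i, Measurable[⨆ j ≥ N, s j] fun ω => c (i + N) * Y (i + N) ω := fun i =>
    (Measurable.mono (hYs (i + N)) (hle2 i) le_rfl).const_mul _
  have : {ω | Summable fun i => c i * Y i ω}
      = {ω | Summable fun i => c (i + N) * Y (i + N) ω} := by
    ext ω; exact (summable_nat_add_iff N).symm
  rw [this]
  exact auxSummableMeasurable (m := ⨆ j ≥ N, s j) _ hmeas'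


lemma auxIndepTransfer {Ω : Type*} [m0 : MeasurableSpace Ω] (μ : Measure Ω)
    (X X' : ℕ → Ω → ℝ) (hXX' : ∀ i, X i =ᵐ[μ] X' i)
    (hindep : iIndepFun X μ) :
    iIndepFun X' μ := by
  classical
  rw [iIndepFun_iff] at hindep ⊢
  intro s f' hf'
  have key : ∀ i ∈ s, ∃ g : Set Ω,
      MeasurableSet[MeasurableSpace.comap (X i) inferInstance] g ∧ f' i =ᵐ[μ] g := by
    intro i hi
    obtain ⟨B, hB, hBe⟩ := hf' i hi
    refine ⟨X i ⁻¹' B, ⟨B, hB, rfl⟩, ?_⟩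
    rw [← hBe, eventuallyEq_set]
    filter_upwards [hXX' i] with ω hω
    simp [Set.mem_preimage, hω]
  choose! g hgmeas hge using key
  have h1 : μ (⋂ i ∈ s, f' i) = μ (⋂ i ∈ s, g i) := by
    apply measure_congr
    rw [eventuallyEq_set]
    have hae : ∀ᵐ ω ∂μ, ∀ i ∈ (s : Set ℕ), (ω ∈ f' i ↔ ω ∈ g i) := by
      rw [ae_ball_iff (s : Set ℕ).to_countable]
      intro i hi
      exact eventuallyEq_set.mp (hge i hi)
    filter_upwards [hae] with ω hω
    simp only [Set.mem_iInter]
    exact forall_congr' fun i => forall_congr' fun hi => hω i hi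
  rw [h1, hindep s hgmeas]
  exact Finset.prod_congr rfl fun i hi => (measure_congr (hge i hi)).symm

/-- An admissible sequence of partitions of `T`, together with a choice `cell n t` of the
element of the `n`-th partition containing `t`. -/
structure AdmissibleSeq {E : Type*} (T : Set E) where
  part : ℕ → Set (Set E)
  cell : ℕ → E → Set E
  zero : part 0 = {T}
  finite : ∀ n, (part n).Finite
  card : ∀ n, 1 ≤ n → (part n).ncard ≤ 2 ^ 2 ^ n
  cover : ∀ n, ⋃₀ part n = T
  disj : ∀ n, (part n).PairwiseDisjoint id
  refine : ∀ n, ∀ A ∈ part (n + 1), ∃ B ∈ part n, A ⊆ B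
  cellMem : ∀ n, ∀ t ∈ T, cell n t ∈ part n ∧ t ∈ cell n t

/-- The Talagrand-type functional `γ_X(T) = inf sup_{t∈T} ∑_n Δ_{2^n}(A_n(t))`, where the
infimum runs over admissible sequences of partitions and `Δ_p` is the diameter in the
metric `d_p(s,s') = ‖X_s - X_{s'}‖_p`. -/
noncomputable def gammaX {Ω E : Type*} [MeasurableSpace Ω] (μ : Measure Ω)
    (Xp : E → Ω → ℝ) (T : Set E) : ℝ≥0∞ :=
  ⨅ A : AdmissibleSeq T, ⨆ t ∈ T, ∑' n : ℕ,
    ⨆ s ∈ A.cell n t, ⨆ s' ∈ A.cell n t,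
      eLpNorm (fun ω => Xp s ω - Xp s' ω) (2 ^ n) μ

/-- The canonical process `X_t ω = ∑ᵢ tᵢ Xᵢ(ω)` for `t ∈ ℓ²`. -/
noncomputable def canonicalProc {Ω : Type*} (X : ℕ → Ω → ℝ)
    (t : lp (fun _ : ℕ => ℝ) 2) (ω : Ω) : ℝ :=
  ∑' i, t i * X i ω

/-- If a canonical process satisfies `E sup_{s,t∈T}(X_s - X_t) ≥ κ γ_X(T)` for all finite
`T` and `‖X_t‖_{2p} ≤ γ ‖X_t‖_p`, then it satisfies Sudakov minoration with constant
`κ/γ`. -/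
theorem stmt16 {Ω : Type*} [MeasurableSpace Ω] (μ : Measure Ω) [IsProbabilityMeasure μ]
    (X : ℕ → Ω → ℝ) (κ γc : ℝ) (hκ : 0 < κ) (hγc : 0 < γc)
    (hindep : iIndepFun X μ)
    (hL2 : ∀ i, MemLp (X i) 2 μ)
    (hmean : ∀ i, ∫ ω, X i ω ∂μ = 0) (hvar : ∀ i, ∫ ω, (X i ω) ^ 2 ∂μ = 1)
    (hlower : ∀ T : Finset (lp (fun _ : ℕ => ℝ) 2),
      ENNReal.ofReal κ * gammaX μ (canonicalProc X) (T : Set (lp (fun _ : ℕ => ℝ) 2))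
        ≤ ENNReal.ofReal
            (∫ ω, ⨆ s ∈ T, ⨆ t ∈ T, (canonicalProc X s ω - canonicalProc X t ω) ∂μ))
    (hregnorm : ∀ p : ℝ, 1 ≤ p → ∀ t : lp (fun _ : ℕ => ℝ) 2,
      eLpNorm (canonicalProc X t) (ENNReal.ofReal (2 * p)) μ
        ≤ ENNReal.ofReal γc * eLpNorm (canonicalProc X t) (ENNReal.ofReal p) μ) :
    ∀ p : ℝ, 1 ≤ p → ∀ u : ℝ, 0 ≤ u → ∀ T : Finset (lp (fun _ : ℕ => ℝ) 2),
      Real.exp p ≤ T.card →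
      (∀ s ∈ T, ∀ t ∈ T, s ≠ t →
        ENNReal.ofReal u ≤
          eLpNorm (fun ω => canonicalProc X s ω - canonicalProc X t ω)
            (ENNReal.ofReal p) μ) →
      κ / γc * u ≤ ∫ ω, ⨆ s ∈ T, ⨆ t ∈ T, (canonicalProc X s ω - canonicalProc X t ω) ∂μ := by
  intro p hp u hu T hcard hsep
  classical
  set X' : ℕ → Ω → ℝ := fun i => ((hL2 i).1.mk (X i)) with hX'def
  have hX'meas : ∀ i, Measurable (X' i) := fun i =>
    (hL2 i).1.stronglyMeasurable_mk.measurable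
  have hXX' : ∀ i, X i =ᵐ[μ] X' i := fun i => (hL2 i).1.ae_eq_mk
  have hXX'all : ∀ᵐ ω ∂μ, ∀ i, X i ω = X' i ω := ae_all_iff.mpr hXX'
  have hfe : ∀ t : lp (fun _ : ℕ => ℝ) 2, canonicalProc X t =ᵐ[μ] canonicalProc X' t := by
    intro t
    filter_upwards [hXX'all] with ω hω
    exact tsum_congr fun i => by rw [hω i]
  have hindep' : iIndepFun X' μ :=
    auxIndepTransfer μ X X' hXX' hindep
  -- dichotomy
  have h01 : ∀ c : ℕ → ℝ, (∀ᵐ ω ∂μ, Summable fun i => c i * X' i ω) ∨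
      ((fun ω => ∑' i, c i * X' i ω) =ᵐ[μ] 0) := by
    intro c
    have hSmeas : MeasurableSet {ω | Summable fun i => c i * X' i ω} := by
      exact auxSummableMeasurable _ fun i => (hX'meas i).const_mul _
    rcases auxZeroOne μ X' hX'meas hindep' c with h | h
    · right
      have hns : ∀ᵐ ω ∂μ, ¬ Summable fun i => c i * X' i ω := by
        rw [ae_iff]
        simpa using h
      filter_upwards [hns] with ω hω
      simp [tsum_eq_zero_of_not_summable hω]
    · left
      have := measure_compl hSmeas (measure_ne_top μ _)
      rw [h, measure_univ, tsub_self] at this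
      rw [ae_iff]
      simpa [Set.compl_setOf] using this
  -- a.e. strong measurability
  have hAESM' : ∀ t : lp (fun _ : ℕ => ℝ) 2, AEStronglyMeasurable (canonicalProc X' t) μ := by
    intro t
    rcases h01 (fun i => t i) with h | h
    · have htd : ∀ᵐ ω ∂μ, Tendsto (fun n => ∑ i ∈ Finset.range n, t i * X' i ω)
          atTop (nhds (canonicalProc X' t ω)) := by
        filter_upwards [h] with ω hω
        exact hω.hasSum.tendsto_sum_nat
      exact (aemeasurable_of_tendsto_metrizable_ae' (fun n =>
        (Finset.measurable_sum _ fun i _ => ((hX'meas i).const_mul _)).aemeasurable)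
        htd).aestronglyMeasurable
    · exact (aestronglyMeasurable_congr (h : canonicalProc X' t =ᵐ[μ] 0)).mpr
        aestronglyMeasurable_const
  have hAESM : ∀ t : lp (fun _ : ℕ => ℝ) 2, AEStronglyMeasurable (canonicalProc X t) μ :=
    fun t => (hAESM' t).congr (hfe t).symm
  have hC : ∀ s s' : lp (fun _ : ℕ => ℝ) 2, ∀ q : ℝ, 1 ≤ q →
      eLpNorm (fun ω => canonicalProc X s ω - canonicalProc X s' ω) (ENNReal.ofReal (2*q)) μ
        ≤ ENNReal.ofReal γc *
          eLpNorm (fun ω => canonicalProc X s ω - canonicalProc X s' ω) (ENNReal.ofReal q) μ := by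
    have hreg' : ∀ q : ℝ, 1 ≤ q → ∀ t, eLpNorm (canonicalProc X' t) (ENNReal.ofReal (2*q)) μ
        ≤ ENNReal.ofReal γc * eLpNorm (canonicalProc X' t) (ENNReal.ofReal q) μ := by
      intro q hq t
      rw [← eLpNorm_congr_ae (hfe t), ← eLpNorm_congr_ae (hfe t)]
      exact hregnorm q hq t
    intro s s' q hq
    have hD : (fun ω => canonicalProc X s ω - canonicalProc X s' ω) =ᵐ[μ]
        (fun ω => canonicalProc X' s ω - canonicalProc X' s' ω) := by
      filter_upwards [hfe s, hfe s'] with ω h1 h2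
      rw [h1, h2]
    rw [eLpNorm_congr_ae hD, eLpNorm_congr_ae hD]
    rcases h01 (fun i => s i) with hs | hs <;> rcases h01 (fun i => s' i) with hs' | hs'
    · have hD2 : (fun ω => canonicalProc X' s ω - canonicalProc X' s' ω) =ᵐ[μ]
          canonicalProc X' (s - s') := by
        filter_upwards [hs, hs'] with ω h1 h2
        have hcoe : ∀ i, ((s - s') : lp (fun _ : ℕ => ℝ) 2) i = s i - s' i := fun i => by
          rw [lp.coeFn_sub]; rfl
        show canonicalProc X' s ω - canonicalProc X' s' ω = ∑' i, ((s - s') : lp _ 2) i * X' i ω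
        calc canonicalProc X' s ω - canonicalProc X' s' ω
            = ∑' i, (s i * X' i ω - s' i * X' i ω) := (Summable.tsum_sub h1 h2).symm
          _ = ∑' i, ((s - s') : lp _ 2) i * X' i ω := by
              exact tsum_congr fun i => by rw [hcoe i, sub_mul]
      rw [eLpNorm_congr_ae hD2, eLpNorm_congr_ae hD2, ← eLpNorm_congr_ae (hfe (s - s')),
        ← eLpNorm_congr_ae (hfe (s - s'))]
      exact hregnorm q hq _
    · have hD2 : (fun ω => canonicalProc X' s ω - canonicalProc X' s' ω) =ᵐ[μ]
          canonicalProc X' s := by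
        filter_upwards [hs'] with ω h2
        have : canonicalProc X' s' ω = 0 := h2
        simp [this]
      rw [eLpNorm_congr_ae hD2, eLpNorm_congr_ae hD2]
      exact hreg' q hq s
    · have hD2 : (fun ω => canonicalProc X' s ω - canonicalProc X' s' ω) =ᵐ[μ]
          (-(canonicalProc X' s')) := by
        filter_upwards [hs] with ω h1
        have : canonicalProc X' s ω = 0 := h1
        simp [this, Pi.neg_apply]
      rw [eLpNorm_congr_ae hD2, eLpNorm_congr_ae hD2, eLpNorm_neg, eLpNorm_neg]
      exact hreg' q hq s'
    · have hD2 : (fun ω => canonicalProc X' s ω - canonicalProc X' s' ω) =ᵐ[μ] (0 : Ω → ℝ) := by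
        filter_upwards [hs, hs'] with ω h1 h2
        have e1 : canonicalProc X' s ω = 0 := h1
        have e2 : canonicalProc X' s' ω = 0 := h2
        simp [e1, e2]
      rw [eLpNorm_congr_ae hD2, eLpNorm_congr_ae hD2, eLpNorm_zero]
      simp

  classical
  set f := canonicalProc X with hf
  -- T is nonempty
  have hTpos : 0 < T.card := by
    have h0 : (0:ℝ) < Real.exp p := Real.exp_pos p
    have := h0.trans_le hcard
    exact_mod_cast this
  obtain ⟨s0, hs0⟩ := Finset.card_pos.mp hTpos
  -- nonnegativity of the integrand
  have hbdd : ∀ (ϕ : lp (fun _ : ℕ => ℝ) 2 → ℝ),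
      BddAbove (Set.range fun t => ⨆ _ : t ∈ T, ϕ t) := by
    intro ϕ
    apply Set.Finite.bddAbove
    apply Set.Finite.subset ((T.finite_toSet.image ϕ).insert 0)
    rintro x ⟨t, rfl⟩
    dsimp only
    by_cases h : t ∈ T
    · rw [ciSup_pos h]
      exact Set.mem_insert_iff.mpr (Or.inr ⟨t, h, rfl⟩)
    · rw [ciSup_neg h, Real.sSup_empty]
      exact Set.mem_insert _ _
  have hnonneg : ∀ ω, 0 ≤ ⨆ s ∈ T, ⨆ t ∈ T, (f s ω - f t ω) := by
    intro ω
    have inner0 : (0:ℝ) ≤ ⨆ t ∈ T, (f s0 ω - f t ω) := by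
      refine le_trans ?_ (le_ciSup (hbdd fun t => f s0 ω - f t ω) s0)
      rw [ciSup_pos hs0, sub_self]
    refine le_trans ?_ (le_ciSup (hbdd fun s => ⨆ t ∈ T, (f s ω - f t ω)) s0)
    rwa [ciSup_pos hs0]
  have hint : 0 ≤ ∫ ω, ⨆ s ∈ T, ⨆ t ∈ T, (f s ω - f t ω) ∂μ :=
    integral_nonneg hnonneg
  -- choice of k
  set k := Nat.log 2 ⌊p⌋₊ with hk
  have hfl : 1 ≤ ⌊p⌋₊ := Nat.le_floor (by exact_mod_cast hp)
  have hk1 : (2:ℝ) ^ k ≤ p := by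
    calc (2:ℝ) ^ k = ((2 ^ k : ℕ) : ℝ) := by push_cast; ring
      _ ≤ (⌊p⌋₊ : ℝ) := by exact_mod_cast Nat.pow_log_le_self 2 (by omega)
      _ ≤ p := Nat.floor_le (by linarith)
  have hk2 : p < 2 ^ (k + 1) := by
    have h1 : (⌊p⌋₊ : ℕ) < 2 ^ (k + 1) := Nat.lt_pow_succ_log_self (by norm_num) _
    have h2 : p < (⌊p⌋₊ : ℝ) + 1 := Nat.lt_floor_add_one p
    have h3 : ((⌊p⌋₊ : ℝ)) + 1 ≤ (2:ℝ) ^ (k+1) := by exact_mod_cast Nat.succ_le_of_lt h1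
    linarith
  -- separation at dyadic exponent
  have hsep2 : ∀ s ∈ T, ∀ t ∈ T, s ≠ t →
      ENNReal.ofReal (u / γc) ≤ eLpNorm (fun ω => f s ω - f t ω) ((2:ℝ≥0∞) ^ k) μ := by
    intro s hs t ht hst
    have h2k1 : (1:ℝ) ≤ 2 ^ k := one_le_pow₀ (by norm_num)
    have h1 : ENNReal.ofReal u ≤ eLpNorm (fun ω => f s ω - f t ω) (ENNReal.ofReal p) μ :=
      hsep s hs t ht hst
    have h2 : eLpNorm (fun ω => f s ω - f t ω) (ENNReal.ofReal p) μ
        ≤ eLpNorm (fun ω => f s ω - f t ω) (ENNReal.ofReal (2 * 2 ^ k)) μ := by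
      refine eLpNorm_le_eLpNorm_of_exponent_le ?_ ((hAESM s).sub (hAESM t))
      apply ENNReal.ofReal_le_ofReal
      rw [show (2:ℝ) * 2 ^ k = 2 ^ (k+1) by ring]
      exact hk2.le
    have h3 := hC s t (2 ^ k) h2k1
    have hkey : ENNReal.ofReal u ≤ ENNReal.ofReal γc *
        eLpNorm (fun ω => f s ω - f t ω) (ENNReal.ofReal ((2:ℝ) ^ k)) μ :=
      h1.trans (h2.trans h3)
    have hexp : ENNReal.ofReal ((2:ℝ) ^ k) = (2:ℝ≥0∞) ^ k := by
      rw [ENNReal.ofReal_pow (by norm_num : (0:ℝ) ≤ 2), ENNReal.ofReal_ofNat]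
    rw [← hexp]
    rw [ENNReal.ofReal_div_of_pos hγc]
    rw [ENNReal.div_le_iff_le_mul (Or.inl (ne_of_gt (ENNReal.ofReal_pos.mpr hγc)))
      (Or.inl ENNReal.ofReal_ne_top)]
    rwa [mul_comm] at hkey
  -- gamma lower bound
  have hgamma : ENNReal.ofReal (u / γc) ≤ gammaX μ f (T : Set (lp (fun _ : ℕ => ℝ) 2)) := by
    refine le_iInf fun A => ?_
    -- pigeonhole
    set P : Finset (Set (lp (fun _ : ℕ => ℝ) 2)) := (A.finite k).toFinset with hP
    have hPcard : P.card ≤ 2 ^ 2 ^ k := by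
      have : P.card = (A.part k).ncard := (Set.ncard_eq_toFinset_card _ (A.finite k)).symm
      rw [this]
      rcases Nat.eq_zero_or_pos k with hk0 | hk0
      · rw [hk0, A.zero]
        simp
      · exact A.card k hk0
    have hlt : P.card < T.card := by
      have hr : ((2:ℝ) ^ 2 ^ k) < Real.exp p := by
        calc ((2:ℝ) ^ 2 ^ k) < Real.exp 1 ^ 2 ^ k := by
              apply pow_lt_pow_left₀ (by linarith [Real.exp_one_gt_d9]) (by norm_num)
              positivity
          _ = Real.exp (2 ^ k) := by rw [Real.exp_one_pow]; norm_num
          _ ≤ Real.exp p := Real.exp_le_exp.mpr (by exact_mod_cast hk1)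
      have : ((2 ^ 2 ^ k : ℕ) : ℝ) < (T.card : ℝ) := by
        push_cast
        exact hr.trans_le hcard
      have h4 : (2 : ℕ) ^ 2 ^ k < T.card := by exact_mod_cast this
      omega
    have hmaps : ∀ t ∈ T, A.cell k t ∈ P := by
      intro t ht
      rw [hP, Set.Finite.mem_toFinset]
      exact (A.cellMem k t (Finset.mem_coe.mpr ht)).1
    obtain ⟨x, hx, y, hy, hxy, hcell⟩ :=
      Finset.exists_ne_map_eq_of_card_lt_of_maps_to hlt hmaps
    have hxmem : x ∈ A.cell k x := (A.cellMem k x (Finset.mem_coe.mpr hx)).2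
    have hymem : y ∈ A.cell k x := by
      rw [hcell]
      exact (A.cellMem k y (Finset.mem_coe.mpr hy)).2
    calc ENNReal.ofReal (u / γc)
        ≤ eLpNorm (fun ω => f x ω - f y ω) ((2:ℝ≥0∞) ^ k) μ := hsep2 x hx y hy hxy
      _ ≤ ⨆ s ∈ A.cell k x, ⨆ s' ∈ A.cell k x,
            eLpNorm (fun ω => f s ω - f s' ω) (2 ^ k) μ :=
          le_iSup₂_of_le x hxmem (le_iSup₂_of_le y hymem le_rfl)
      _ ≤ ∑' n : ℕ, ⨆ s ∈ A.cell n x, ⨆ s' ∈ A.cell n x,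
            eLpNorm (fun ω => f s ω - f s' ω) (2 ^ n) μ := ENNReal.le_tsum k
      _ ≤ ⨆ t ∈ (T : Set (lp (fun _ : ℕ => ℝ) 2)), ∑' n : ℕ,
            ⨆ s ∈ A.cell n t, ⨆ s' ∈ A.cell n t,
              eLpNorm (fun ω => f s ω - f s' ω) (2 ^ n) μ :=
          le_iSup₂ (f := fun t (_ : t ∈ (T : Set (lp (fun _ : ℕ => ℝ) 2))) => ∑' n : ℕ,
            ⨆ s ∈ A.cell n t, ⨆ s' ∈ A.cell n t,
              eLpNorm (fun ω => f s ω - f s' ω) (2 ^ n) μ) x (Finset.mem_coe.mpr hx)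
  -- conclusion
  have hchain : ENNReal.ofReal (κ / γc * u)
      ≤ ENNReal.ofReal (∫ ω, ⨆ s ∈ T, ⨆ t ∈ T, (f s ω - f t ω) ∂μ) := by
    calc ENNReal.ofReal (κ / γc * u) = ENNReal.ofReal κ * ENNReal.ofReal (u / γc) := by
          rw [← ENNReal.ofReal_mul hκ.le]
          ring_nf
      _ ≤ ENNReal.ofReal κ * gammaX μ f (T : Set (lp (fun _ : ℕ => ℝ) 2)) := by
          exact mul_le_mul_right hgamma _
      _ ≤ _ := hlower T
  exact (ENNReal.ofReal_le_ofReal_iff hint).mp hchain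
end

section
/- For the canonical Bernoulli process X_t = ∑_i t_i ε_i with (ε_i) i.i.d. Rademacher, and T = {e_n : n ≥ 1} the canonical basis of ℓ², one has E sup_{s,t∈T}(X_s − X_t) = 2, while γ_X(T) = ∞. -/
open MeasureTheory ProbabilityTheory ENNReal

lemma aemeas {Ω : Type*} [MeasurableSpace Ω] (μ : Measure Ω) (ε : ℕ → Ω → ℝ)
    (hrad : ∀ i, Measure.map (ε i) μ
      = (2 : ℝ≥0∞)⁻¹ • (Measure.dirac (1 : ℝ) + Measure.dirac (-1 : ℝ))) (i : ℕ) :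
    AEMeasurable (ε i) μ := by
  by_contra h
  have h0 := Measure.map_of_not_aemeasurable h
  rw [hrad i] at h0
  have := congrArg (fun m : Measure ℝ => m Set.univ) h0
  simp at this

lemma meas_pre {Ω : Type*} [MeasurableSpace Ω] (μ : Measure Ω) (ε : ℕ → Ω → ℝ)
    (hrad : ∀ i, Measure.map (ε i) μ
      = (2 : ℝ≥0∞)⁻¹ • (Measure.dirac (1 : ℝ) + Measure.dirac (-1 : ℝ))) (i : ℕ)
    (c : ℝ) (hc : c = 1 ∨ c = -1) :
    μ (ε i ⁻¹' {c}) = 2⁻¹ := by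
  have h1 : μ (ε i ⁻¹' {c}) = Measure.map (ε i) μ {c} :=
    (Measure.map_apply_of_aemeasurable (aemeas μ ε hrad i) (measurableSet_singleton c)).symm
  rw [h1, hrad i]
  rcases hc with rfl | rfl <;> simp <;> norm_num

lemma proc_single {Ω : Type*} (ε : ℕ → Ω → ℝ) (m : ℕ) (ω : Ω) :
    canonicalProc ε (lp.single 2 m (1 : ℝ)) ω = ε m ω := by
  unfold canonicalProc
  rw [tsum_eq_single m]
  · simp [lp.single_apply]
  · intro i hi
    simp [lp.single_apply, hi]

lemma key_lb {Ω : Type*} [MeasurableSpace Ω] (μ : Measure Ω) [IsProbabilityMeasure μ]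
    (ε : ℕ → Ω → ℝ)
    (hindep : iIndepFun (m := fun _ : ℕ => (inferInstance : MeasurableSpace ℝ)) ε μ)
    (hrad : ∀ i, Measure.map (ε i) μ
      = (2 : ℝ≥0∞)⁻¹ • (Measure.dirac (1 : ℝ) + Measure.dirac (-1 : ℝ)))
    {a b : ℕ} (hab : a ≠ b) {p : ℝ≥0∞} (hp : 1 ≤ p) :
    (2 : ℝ≥0∞)⁻¹ ≤ eLpNorm (fun ω => ε a ω - ε b ω) p μ := by
  have ha := aemeas μ ε hrad a
  have hb := aemeas μ ε hrad b
  set fa := ha.mk (ε a) with hfa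
  set fb := hb.mk (ε b) with hfb
  have hma : Measurable fa := ha.measurable_mk
  have hmb : Measurable fb := hb.measurable_mk
  have hcong : (fun ω => ε a ω - ε b ω) =ᵐ[μ] fun ω => fa ω - fb ω := by
    filter_upwards [ha.ae_eq_mk, hb.ae_eq_mk] with ω h1 h2
    simp [h1, h2]; rfl
  rw [eLpNorm_congr_ae hcong]
  have hsm : AEStronglyMeasurable (fun ω => fa ω - fb ω) μ :=
    (hma.sub hmb).aestronglyMeasurable
  refine le_trans ?_ (eLpNorm_le_eLpNorm_of_exponent_le hp hsm)
  rw [eLpNorm_one_eq_lintegral_enorm]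
  set S := fa ⁻¹' {1} ∩ fb ⁻¹' {-1} with hS
  have hSm : MeasurableSet S := (hma (measurableSet_singleton 1)).inter
    (hmb (measurableSet_singleton (-1)))
  have hind : IndepFun fa fb μ :=
    (hindep.indepFun hab).congr ha.ae_eq_mk hb.ae_eq_mk
  have hmuS : μ S = 2⁻¹ * 2⁻¹ := by
    rw [hS, hind.measure_inter_preimage_eq_mul _ _ (measurableSet_singleton 1)
      (measurableSet_singleton (-1))]
    have e1 : μ (fa ⁻¹' {1}) = μ (ε a ⁻¹' {1}) := by
      apply measure_congr
      filter_upwards [ha.ae_eq_mk] with ω hω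
      have h' : fa ω = ε a ω := hω.symm
      exact (congrArg (fun x => x ∈ ({1} : Set ℝ)) h')
    have e2 : μ (fb ⁻¹' {-1}) = μ (ε b ⁻¹' {-1}) := by
      apply measure_congr
      filter_upwards [hb.ae_eq_mk] with ω hω
      have h' : fb ω = ε b ω := hω.symm
      exact (congrArg (fun x => x ∈ ({-1} : Set ℝ)) h')
    rw [e1, e2, meas_pre μ ε hrad a 1 (Or.inl rfl), meas_pre μ ε hrad b (-1) (Or.inr rfl)]
  have hle : ∀ ω, S.indicator (fun _ => (2 : ℝ≥0∞)) ω ≤ ‖fa ω - fb ω‖₊ := by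
    intro ω
    by_cases hω : ω ∈ S
    · have h1 : fa ω = 1 := hω.1
      have h2 : fb ω = -1 := hω.2
      rw [Set.indicator_of_mem hω]
      simp [h1, h2]
      norm_num
    · simp [Set.indicator_of_notMem hω]
  calc (2 : ℝ≥0∞)⁻¹ = 2 * μ S := by
        rw [hmuS, ← mul_assoc, ENNReal.mul_inv_cancel (by norm_num) (by norm_num), one_mul]
    _ = ∫⁻ ω, S.indicator (fun _ => (2 : ℝ≥0∞)) ω ∂μ := by
        rw [lintegral_indicator hSm, setLIntegral_const]
    _ ≤ ∫⁻ ω, ‖fa ω - fb ω‖₊ ∂μ := lintegral_mono hle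

lemma exists_chain {E : Type*} {T : Set E} (A : AdmissibleSeq T) (hT : T.Infinite) :
    ∃ B : ℕ → Set E, (∀ n, B n ∈ A.part n) ∧ (∀ n, B (n + 1) ⊆ B n) ∧
      ∀ n, (B n ∩ T).Infinite := by
  have step : ∀ n (C : Set E), C ∈ A.part n → (C ∩ T).Infinite →
      ∃ D, D ∈ A.part (n + 1) ∧ (D ∩ T).Infinite ∧ D ⊆ C := by
    intro n C hC hInf
    have hsub : C ∩ T ⊆ ⋃ D ∈ A.part (n + 1), D ∩ (C ∩ T) := by
      intro x hx
      have hxT : x ∈ T := hx.2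
      rw [← A.cover (n + 1)] at hxT
      obtain ⟨D, hD, hxD⟩ := hxT
      exact Set.mem_biUnion hD ⟨hxD, hx⟩
    have hex : ∃ D ∈ A.part (n + 1), (D ∩ (C ∩ T)).Infinite := by
      by_contra hcon
      push_neg at hcon
      have hfin : (⋃ D ∈ A.part (n + 1), D ∩ (C ∩ T)).Finite :=
        Set.Finite.biUnion (A.finite (n + 1))
          (fun D hD => hcon D hD)
      exact hInf (hfin.subset hsub)
    obtain ⟨D, hD, hDinf⟩ := hex
    obtain ⟨B', hB', hsubB⟩ := A.refine n D hD
    have hne : (D ∩ C).Nonempty := by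
      obtain ⟨x, hx⟩ := hDinf.nonempty
      exact ⟨x, hx.1, hx.2.1⟩
    have hBC : B' = C := by
      by_contra hne'
      have hdisj := A.disj n hB' hC hne'
      obtain ⟨x, hxD, hxC⟩ := hne
      exact (Set.disjoint_left.mp hdisj (hsubB hxD)) hxC
    exact ⟨D, hD, hDinf.mono (fun x hx => ⟨hx.1, hx.2.2⟩), hBC ▸ hsubB⟩
  have base : T ∈ A.part 0 := by rw [A.zero]; exact rfl
  choose st hmem hinf hsub using step
  let f : ∀ n : ℕ, {C : Set E // C ∈ A.part n ∧ (C ∩ T).Infinite} := fun n =>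
    Nat.rec ⟨T, base, by simpa [Set.inter_self] using hT⟩
      (fun n p => ⟨st n p.1 p.2.1 p.2.2, hmem n p.1 p.2.1 p.2.2, hinf n p.1 p.2.1 p.2.2⟩) n
  exact ⟨fun n => (f n).1, fun n => (f n).2.1,
    fun n => hsub n (f n).1 (f n).2.1 (f n).2.2, fun n => (f n).2.2⟩

lemma einj : Function.Injective (fun n : ℕ => lp.single 2 n (1 : ℝ)) := by
  intro m n h
  by_contra hmn
  have := congrArg (fun v : lp (fun _ : ℕ => ℝ) 2 => (v : ∀ i : ℕ, ℝ) m) h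
  simp [lp.single_apply, hmn] at this

lemma gamma_top {Ω : Type*} [MeasurableSpace Ω] (μ : Measure Ω) [IsProbabilityMeasure μ]
    (ε : ℕ → Ω → ℝ)
    (hindep : iIndepFun (m := fun _ : ℕ => (inferInstance : MeasurableSpace ℝ)) ε μ)
    (hrad : ∀ i, Measure.map (ε i) μ
      = (2 : ℝ≥0∞)⁻¹ • (Measure.dirac (1 : ℝ) + Measure.dirac (-1 : ℝ))) :
    gammaX μ (canonicalProc ε)
      (Set.range (fun n : ℕ => lp.single 2 n (1 : ℝ))) = ⊤ := by
  set e : ℕ → lp (fun _ : ℕ => ℝ) 2 := fun n => lp.single 2 n (1 : ℝ) with he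
  unfold gammaX
  rw [iInf_eq_top]
  intro A
  have hT : (Set.range e).Infinite := Set.infinite_range_of_injective einj
  obtain ⟨B, hmem, hstep, hinf⟩ := exists_chain A hT
  have hBmono : ∀ m n, m ≤ n → B n ⊆ B m := by
    intro m n h
    induction h with
    | refl => exact subset_rfl
    | step h ih => exact (hstep _).trans ih
  have key : ∀ N : ℕ, ((N : ℝ≥0∞) + 1) * 2⁻¹ ≤ ⨆ t ∈ Set.range e, ∑' n : ℕ,
      ⨆ s ∈ A.cell n t, ⨆ s' ∈ A.cell n t,
        eLpNorm (fun ω => canonicalProc ε s ω - canonicalProc ε s' ω) (2 ^ n) μ := by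
    intro N
    obtain ⟨t, htB, htT⟩ : ∃ t, t ∈ B N ∧ t ∈ Set.range e := by
      obtain ⟨x, hx⟩ := (hinf N).nonempty
      exact ⟨x, hx.1, hx.2⟩
    refine le_iSup₂_of_le t htT ?_
    have hcell : ∀ n ≤ N, A.cell n t = B n := by
      intro n hn
      obtain ⟨hc1, hc2⟩ := A.cellMem n t htT
      by_contra hne
      have hdisj := A.disj n hc1 (hmem n) hne
      exact (Set.disjoint_left.mp hdisj hc2) (hBmono n N hn htB)
    have hterm : ∀ n ≤ N, (2 : ℝ≥0∞)⁻¹ ≤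
        ⨆ s ∈ A.cell n t, ⨆ s' ∈ A.cell n t,
          eLpNorm (fun ω => canonicalProc ε s ω - canonicalProc ε s' ω) (2 ^ n) μ := by
      intro n hn
      rw [hcell n hn]
      obtain ⟨s', hs'B, hs'T, hs'ne⟩ : ∃ s', s' ∈ B n ∧ s' ∈ Set.range e ∧ s' ≠ t := by
        obtain ⟨x, hx⟩ := ((hinf n).diff (Set.finite_singleton t)).nonempty
        exact ⟨x, hx.1.1, hx.1.2, hx.2⟩
      obtain ⟨a, rfl⟩ := htT
      obtain ⟨b, rfl⟩ := hs'T
      have hab : a ≠ b := fun h => hs'ne (by rw [h])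
      refine le_iSup₂_of_le (e a) (hBmono n N hn htB) (le_iSup₂_of_le (e b) hs'B ?_)
      have heq : (fun ω => canonicalProc ε (e a) ω - canonicalProc ε (e b) ω)
          = fun ω => ε a ω - ε b ω := funext fun ω => by
        rw [he]; simp only []; rw [proc_single, proc_single]
      rw [heq]
      exact key_lb μ ε hindep hrad hab (one_le_pow_of_one_le' one_le_two n)
    calc ((N : ℝ≥0∞) + 1) * 2⁻¹
        = ∑ n ∈ Finset.range (N + 1), (2 : ℝ≥0∞)⁻¹ := by
          rw [Finset.sum_const, Finset.card_range, nsmul_eq_mul]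
          push_cast
          ring
      _ ≤ ∑ n ∈ Finset.range (N + 1), ⨆ s ∈ A.cell n t, ⨆ s' ∈ A.cell n t,
            eLpNorm (fun ω => canonicalProc ε s ω - canonicalProc ε s' ω) (2 ^ n) μ :=
          Finset.sum_le_sum (fun n hn => hterm n (Nat.lt_succ_iff.mp (Finset.mem_range.mp hn)))
      _ ≤ _ := ENNReal.sum_le_tsum _
  by_contra hne
  obtain ⟨n, hn⟩ := ENNReal.exists_nat_gt hne
  have h1 := key (2 * n)
  have h2 : (n : ℝ≥0∞) ≤ ((2 * n : ℕ) : ℝ≥0∞) * 2⁻¹ := by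
    push_cast
    rw [mul_comm (2 : ℝ≥0∞) (n : ℝ≥0∞), mul_assoc,
      ENNReal.mul_inv_cancel (by norm_num) (by norm_num), mul_one]
  have h3 : (n : ℝ≥0∞) ≤ (((2 * n : ℕ) : ℝ≥0∞) + 1) * 2⁻¹ := by
    refine h2.trans (mul_le_mul_left ?_ _)
    exact le_self_add
  exact absurd ((h3.trans h1).trans_lt hn) (lt_irrefl _)

lemma int_two {Ω : Type*} [MeasurableSpace Ω] (μ : Measure Ω) [IsProbabilityMeasure μ]
    (ε : ℕ → Ω → ℝ)
    (hindep : iIndepFun (m := fun _ : ℕ => (inferInstance : MeasurableSpace ℝ)) ε μ)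
    (hrad : ∀ i, Measure.map (ε i) μ
      = (2 : ℝ≥0∞)⁻¹ • (Measure.dirac (1 : ℝ) + Measure.dirac (-1 : ℝ))) :
    (∫ ω, ⨆ s ∈ Set.range (fun n : ℕ => lp.single 2 n (1 : ℝ)),
        ⨆ t ∈ Set.range (fun n : ℕ => lp.single 2 n (1 : ℝ)),
          (canonicalProc ε s ω - canonicalProc ε t ω) ∂μ) = 2 := by
  have hae1 : ∀ i, ∀ᵐ ω ∂μ, ε i ω = 1 ∨ ε i ω = -1 := by
    intro i
    rw [ae_iff]
    have hset : {ω | ¬(ε i ω = 1 ∨ ε i ω = -1)} = ε i ⁻¹' ({1, -1}ᶜ) := by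
      ext ω; simp [not_or]
    have hms : MeasurableSet (({1, -1} : Set ℝ)ᶜ) :=
      (Set.Finite.insert 1 (Set.finite_singleton (-1))).measurableSet.compl
    rw [hset, ← Measure.map_apply_of_aemeasurable (aemeas μ ε hrad i) hms, hrad i]
    simp [Measure.dirac_apply' _ hms]
  have hzero : ∀ c : ℝ, c = 1 ∨ c = -1 → μ (⋂ i, ε i ⁻¹' {c}) = 0 := by
    intro c hc
    have hle : ∀ n : ℕ, μ (⋂ i, ε i ⁻¹' {c}) ≤ (2 : ℝ≥0∞)⁻¹ ^ n := by
      intro n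
      have hsub : (⋂ i, ε i ⁻¹' {c}) ⊆ ⋂ i ∈ Finset.range n, ε i ⁻¹' {c} := by
        intro x hx
        simp only [Set.mem_iInter] at hx ⊢
        exact fun i _ => hx i
      refine (measure_mono hsub).trans ?_
      have hprod := (iIndepFun_iff (fun _ : ℕ => (inferInstance : MeasurableSpace ℝ)) ε μ).mp
        hindep (Finset.range n) (f' := fun i => ε i ⁻¹' {c})
        (fun i _ => MeasurableSpace.measurableSet_comap.mpr
          ⟨{c}, measurableSet_singleton c, rfl⟩)
      rw [hprod, Finset.prod_congr rfl (fun i _ => meas_pre μ ε hrad i c hc),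
        Finset.prod_const, Finset.card_range]
    refine le_zero_iff.mp ?_
    exact ge_of_tendsto' (ENNReal.tendsto_pow_atTop_nhds_zero_of_lt_one
      (by norm_num : (2 : ℝ≥0∞)⁻¹ < 1)) hle
  have main : ∀ᵐ ω ∂μ, (⨆ s ∈ Set.range (fun n : ℕ => lp.single 2 n (1 : ℝ)),
      ⨆ t ∈ Set.range (fun n : ℕ => lp.single 2 n (1 : ℝ)),
        (canonicalProc ε s ω - canonicalProc ε t ω)) = 2 := by
    filter_upwards [ae_all_iff.mpr hae1,
      measure_eq_zero_iff_ae_notMem.mp (hzero 1 (Or.inl rfl)),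
      measure_eq_zero_iff_ae_notMem.mp (hzero (-1) (Or.inr rfl))] with ω hpm hne1 hnem1
    obtain ⟨i, hi⟩ : ∃ i, ε i ω = 1 := by
      simp only [Set.mem_iInter, not_forall, Set.mem_preimage, Set.mem_singleton_iff] at hnem1
      obtain ⟨i, hi⟩ := hnem1
      rcases hpm i with h | h
      · exact ⟨i, h⟩
      · exact absurd h hi
    obtain ⟨j, hj⟩ : ∃ j, ε j ω = -1 := by
      simp only [Set.mem_iInter, not_forall, Set.mem_preimage, Set.mem_singleton_iff] at hne1
      obtain ⟨j, hj⟩ := hne1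
      rcases hpm j with h | h
      · exact absurd h hj
      · exact ⟨j, h⟩
    have hub : ∀ m n : ℕ,
        canonicalProc ε (lp.single 2 m (1 : ℝ)) ω
          - canonicalProc ε (lp.single 2 n (1 : ℝ)) ω ≤ 2 := by
      intro m n
      rw [proc_single, proc_single]
      rcases hpm m with h | h <;> rcases hpm n with h' | h' <;> rw [h, h'] <;> norm_num
    apply le_antisymm
    · refine Real.iSup_le (fun s => Real.iSup_le (fun hs => Real.iSup_le (fun t =>
        Real.iSup_le (fun ht => ?_) (by norm_num)) (by norm_num)) (by norm_num)) (by norm_num)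
      obtain ⟨m, rfl⟩ := hs
      obtain ⟨n, rfl⟩ := ht
      exact hub m n
    · have l1 : (2 : ℝ) ≤ canonicalProc ε (lp.single 2 i (1 : ℝ)) ω
          - canonicalProc ε (lp.single 2 j (1 : ℝ)) ω := by
        rw [proc_single, proc_single, hi, hj]; norm_num
      have bdd1 : BddAbove (Set.range (fun t =>
          ⨆ _ : t ∈ Set.range (fun n : ℕ => lp.single 2 n (1 : ℝ)),
            (canonicalProc ε (lp.single 2 i (1 : ℝ)) ω - canonicalProc ε t ω))) := by
        refine ⟨2, ?_⟩
        rintro y ⟨t, rfl⟩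
        refine Real.iSup_le (fun ht => ?_) (by norm_num)
        obtain ⟨n, rfl⟩ := ht
        exact hub i n
      have l2 : (2 : ℝ) ≤ ⨆ t ∈ Set.range (fun n : ℕ => lp.single 2 n (1 : ℝ)),
          (canonicalProc ε (lp.single 2 i (1 : ℝ)) ω - canonicalProc ε t ω) := by
        refine le_ciSup_of_le bdd1 (lp.single 2 j (1 : ℝ)) ?_
        rw [ciSup_pos ⟨j, rfl⟩]
        exact l1
      have bdd2 : BddAbove (Set.range (fun s =>
          ⨆ _ : s ∈ Set.range (fun n : ℕ => lp.single 2 n (1 : ℝ)),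
            ⨆ t ∈ Set.range (fun n : ℕ => lp.single 2 n (1 : ℝ)),
              (canonicalProc ε s ω - canonicalProc ε t ω))) := by
        refine ⟨2, ?_⟩
        rintro y ⟨s, rfl⟩
        refine Real.iSup_le (fun hs => ?_) (by norm_num)
        obtain ⟨m, rfl⟩ := hs
        refine Real.iSup_le (fun t => Real.iSup_le (fun ht => ?_) (by norm_num)) (by norm_num)
        obtain ⟨n, rfl⟩ := ht
        exact hub m n
      refine le_ciSup_of_le bdd2 (lp.single 2 i (1 : ℝ)) ?_
      rw [ciSup_pos ⟨i, rfl⟩]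
      exact l2
  rw [integral_congr_ae main, integral_const]
  simp

/-- For the canonical Bernoulli process and `T = {eₙ : n}` the canonical basis of `ℓ²`,
`E sup_{s,t∈T}(X_s - X_t) = 2` while `γ_X(T) = ∞`. -/
theorem stmt18 {Ω : Type*} [MeasurableSpace Ω] (μ : Measure Ω) [IsProbabilityMeasure μ]
    (ε : ℕ → Ω → ℝ)
    (hindep : iIndepFun (m := fun _ : ℕ => (inferInstance : MeasurableSpace ℝ)) ε μ)
    (hrad : ∀ i, Measure.map (ε i) μ
      = (2 : ℝ≥0∞)⁻¹ • (Measure.dirac (1 : ℝ) + Measure.dirac (-1 : ℝ))) :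
    (∫ ω, ⨆ s ∈ Set.range (fun n : ℕ => lp.single 2 n (1 : ℝ)),
        ⨆ t ∈ Set.range (fun n : ℕ => lp.single 2 n (1 : ℝ)),
          (canonicalProc ε s ω - canonicalProc ε t ω) ∂μ) = 2 ∧
    gammaX μ (canonicalProc ε)
      (Set.range (fun n : ℕ => lp.single 2 n (1 : ℝ))) = ⊤ := by
  exact ⟨int_two μ ε hindep hrad, gamma_top μ ε hindep hrad⟩
end
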